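/- Completeness Lemma. Let n ∈ ℕ and t ∈ [−1,1). Then the family (M_{n,q} : q ∈ Prob({0,1}²), q₀₁ − q₁₀ ≥ t) is complete in the sense of Lehmann–Scheffé; in particular, if g : {k ∈ ℕ₀^({0,1}²) : k₊₊ = n} → ℝ satisfies Σ_k M_{n,q}({k})·g(k) = 0 for every q ∈ Prob({0,1}²) with q₀₁ − q₁₀ ≥ t, then g(k) = 0 for every k with k₊₊ = n. -/

import Mathlib

open scoped BigOperators

noncomputable section

/-- `p` is a discrete probability density on the finite set `X`,
i.e. a function `X → [0,1]` summing to `1`. -/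
def IsProb {X : Type*} [Fintype X] (p : X → ℝ) : Prop :=
  (∀ x, 0 ≤ p x ∧ p x ≤ 1) ∧ ∑ x, p x = 1

/-- `χ` is a Markov transition density: `χ x` is a probability density for each `x`. -/
def IsMarkov {X Y : Type*} [Fintype Y] (χ : X → Y → ℝ) : Prop :=
  ∀ x, IsProb (χ x)

/-- The mixture density `μ₁(π,χ)` on `{0,1}` (indices: `χ i j = χ_{j|i}`). -/
def mu1 (π : Fin 2 → ℝ) (χ : Fin 2 → Fin 2 → ℝ) : Fin 2 → ℝ :=
  fun j => ∑ i, π i * χ i j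

/-- The mixture density `μ₂(π,χ)` on `{0,1}²` (indices: `χ i j = χ_{j|i}`). -/
def mu2 (π : Fin 2 → ℝ) (χ : Fin 2 → Fin 2 × Fin 2 → ℝ) : Fin 2 × Fin 2 → ℝ :=
  fun j => ∑ i, π i * χ i j

/-- First-test characteristic: `chi1 χ i ι = χ^{(1)}_{ι|i} = χ_{ι0|i} + χ_{ι1|i}`. -/
def chi1 (χ : Fin 2 → Fin 2 × Fin 2 → ℝ) : Fin 2 → Fin 2 → ℝ :=
  fun i ι => χ i (ι, 0) + χ i (ι, 1)

/-- Second-test characteristic: `chi2 χ i ι = χ^{(2)}_{ι|i} = χ_{0ι|i} + χ_{1ι|i}`. -/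
def chi2 (χ : Fin 2 → Fin 2 × Fin 2 → ℝ) : Fin 2 → Fin 2 → ℝ :=
  fun i ι => χ i (0, ι) + χ i (1, ι)

/-- The multinomial point mass `M_{n,q}({k}) = n! ∏_x q_x^{k_x}/k_x!`. -/
def mPMF {X : Type*} [Fintype X] (n : ℕ) (q : X → ℝ) (k : X → ℕ) : ℝ :=
  (n.factorial : ℝ) * ∏ x, q x ^ k x / ((k x).factorial : ℝ)

/-- `mProb n q S` is the probability, under the multinomial distribution `M_{n,q}`
(supported on `{k : Σ_x k_x = n}`), of the event `S`. -/
def mProb {X : Type*} [Fintype X] (n : ℕ) (q : X → ℝ) (S : Set (X → ℕ)) : ℝ :=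
  ∑' k : X → ℕ, Set.indicator {k | (∑ x, k x) = n ∧ k ∈ S} (mPMF n q) k


lemma peel {α : Type*} (T : Finset α) (e : α → ℕ) (φ : α → ℝ) (D : Set ℝ) (hD : D.Infinite)
    (h : ∀ x ∈ D, ∑ k ∈ T, φ k * x ^ e k = 0) (m : ℕ) :
    ∑ k ∈ T.filter (fun k => e k = m), φ k = 0 := by
  have hP : (∑ k ∈ T, Polynomial.C (φ k) * Polynomial.X ^ e k : Polynomial ℝ) = 0 := by
    apply Polynomial.eq_zero_of_infinite_isRoot
    apply hD.mono
    intro x hx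
    simp only [Set.mem_setOf_eq, Polynomial.IsRoot, Polynomial.eval_finset_sum,
      Polynomial.eval_mul, Polynomial.eval_C, Polynomial.eval_pow, Polynomial.eval_X]
    exact h x hx
  have := congrArg (fun p => Polynomial.coeff p m) hP
  simp only [Polynomial.finset_sum_coeff, Polynomial.coeff_C_mul, Polynomial.coeff_X_pow,
    Polynomial.coeff_zero] at this
  rw [Finset.sum_filter]
  refine Eq.trans ?_ this
  apply Finset.sum_congr rfl
  intro k _
  by_cases hk : m = e k
  · simp [hk]
  · simp [hk, Ne.symm hk]

theorem stmt_18 (n : ℕ) (hn : 0 < n) (t : ℝ) (ht : t ∈ Set.Ico (-1:ℝ) 1)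
    (g : ((Fin 2 × Fin 2) → ℕ) → ℝ)
    (hg : ∀ q : Fin 2 × Fin 2 → ℝ, IsProb q → t ≤ q (0, 1) - q (1, 0) →
      (∑' k : (Fin 2 × Fin 2) → ℕ,
        Set.indicator {k | (∑ x, k x) = n} (fun k => mPMF n q k * g k) k) = 0) :
    ∀ k : (Fin 2 × Fin 2) → ℕ, (∑ x, k x) = n → g k = 0 := by
  classical
  set S : Finset ((Fin 2 × Fin 2) → ℕ) :=
    (Fintype.piFinset fun _ : Fin 2 × Fin 2 => Finset.range (n+1)).filter
      (fun k => ∑ x, k x = n) with hS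
  set C : ((Fin 2 × Fin 2) → ℕ) → ℝ :=
    fun k => (n.factorial : ℝ) / (∏ x, ((k x).factorial : ℝ)) * g k with hC
  have hmemS : ∀ k : (Fin 2 × Fin 2) → ℕ, (∑ x, k x) = n → k ∈ S := by
    intro k hk
    simp only [hS, Finset.mem_filter, Fintype.mem_piFinset, Finset.mem_range]
    refine ⟨fun x => ?_, hk⟩
    have := Finset.single_le_sum (f := k) (fun x _ => Nat.zero_le _) (Finset.mem_univ x)
    omega
  have hSn : ∀ k ∈ S, (∑ x, k x) = n := by
    intro k hk
    simpa [hS] using (Finset.mem_filter.mp hk).2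
  have key : ∀ q : Fin 2 × Fin 2 → ℝ, IsProb q → t ≤ q (0,1) - q (1,0) →
      ∑ k ∈ S, C k * ∏ x, q x ^ k x = 0 := by
    intro q hq hqt
    have h0 := hg q hq hqt
    have h1 : (∑' k : (Fin 2 × Fin 2) → ℕ,
        Set.indicator {k | (∑ x, k x) = n} (fun k => mPMF n q k * g k) k) =
        ∑ k ∈ S, Set.indicator {k | (∑ x, k x) = n} (fun k => mPMF n q k * g k) k :=
      tsum_eq_sum (fun k hk =>
        Set.indicator_of_notMem (s := {k : (Fin 2 × Fin 2) → ℕ | (∑ x, k x) = n})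
          (fun hkn => hk (hmemS k hkn)) _)
    rw [h1] at h0
    rw [← h0]
    apply Finset.sum_congr rfl
    intro k hk
    have hkn : k ∈ {k : (Fin 2 × Fin 2) → ℕ | (∑ x, k x) = n} := hSn k hk
    rw [Set.indicator_of_mem hkn]
    simp only [mPMF, hC]
    rw [Finset.prod_div_distrib]
    have hfac : (∏ x, ((k x).factorial : ℝ)) ≠ 0 := by
      apply Finset.prod_ne_zero_iff.mpr
      intro x _
      exact_mod_cast (Nat.factorial_pos (k x)).ne'
    field_simp
  obtain ⟨ht1, ht2⟩ := ht
  set ε : ℝ := (1 - t)/16 with hε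
  have hε0 : 0 < ε := by rw [hε]; linarith
  set b0 : ℝ := (t+3)/4 with hb0
  set A : Set ℝ := Set.Ioo (ε/2) ε with hA
  set B : Set ℝ := Set.Ioo b0 (b0 + ε) with hB
  have hAinf : A.Infinite := by
    rw [hA]
    exact Set.infinite_coe_iff.mp (Set.Ioo.infinite (by linarith))
  have hBinf : B.Infinite := by
    rw [hB]
    exact Set.infinite_coe_iff.mp (Set.Ioo.infinite (by linarith))
  have base : ∀ a ∈ A, ∀ b ∈ B, ∀ c ∈ A, ∀ d ∈ A,
      ∑ k ∈ S, C k * (a ^ k (0,0) * (b ^ k (0,1) * (c ^ k (1,0) * d ^ k (1,1)))) = 0 := by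
    intro a ha b hb c hc d hd
    obtain ⟨ha1, ha2⟩ := ha
    obtain ⟨hb1, hb2⟩ := hb
    obtain ⟨hc1, hc2⟩ := hc
    obtain ⟨hd1, hd2⟩ := hd
    have hb0half : (1:ℝ)/2 ≤ b0 := by rw [hb0]; linarith
    set s : ℝ := a + b + c + d with hs
    have hs0 : 0 < s := by rw [hs]; linarith
    have hs1 : s < 1 := by
      rw [hs]
      have : b0 + 4*ε ≤ 1 := by rw [hb0, hε]; linarith
      linarith
    set v : Fin 2 × Fin 2 → ℝ := fun p => ![![a,b],![c,d]] p.1 p.2 with hv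
    have hvsum : ∑ x, v x = s := by
      rw [hv, hs]
      rw [Fintype.sum_prod_type]
      simp [Fin.sum_univ_two]
      ring
    have hvpos : ∀ x, 0 < v x := by
      rintro ⟨i, j⟩
      fin_cases i <;> fin_cases j <;> simp [hv] <;> linarith
    have hvle : ∀ x, v x ≤ s := by
      rintro ⟨i, j⟩
      fin_cases i <;> fin_cases j <;> simp [hv, hs] <;> linarith
    set q : Fin 2 × Fin 2 → ℝ := fun x => v x / s with hq
    have hqProb : IsProb q := by
      constructor
      · intro x
        exact ⟨div_nonneg (hvpos x).le hs0.le, by rw [div_le_one hs0]; exact hvle x⟩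
      · rw [hq]
        rw [← Finset.sum_div, hvsum, div_self hs0.ne']
    have hqt : t ≤ q (0,1) - q (1,0) := by
      have hq01 : q (0,1) = b / s := by simp [hq, hv]
      have hq10 : q (1,0) = c / s := by simp [hq, hv]
      rw [hq01, hq10, div_sub_div_same, le_div_iff₀ hs0]
      have hbc : b0 - ε < b - c := by linarith
      rcases le_or_gt 0 t with h0 | h0
      · have h1 : t * s ≤ t := by nlinarith
        have h2 : t ≤ b0 - ε := by rw [hb0, hε]; linarith
        linarith
      · have h1 : t * s < 0 := mul_neg_of_neg_of_pos h0 hs0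
        have h2 : 0 < b0 - ε := by rw [hb0, hε]; linarith
        linarith
    have h0 := key q hqProb hqt
    have hprod : ∀ k ∈ S, ∏ x, q x ^ k x =
        (a ^ k (0,0) * (b ^ k (0,1) * (c ^ k (1,0) * d ^ k (1,1)))) / s ^ n := by
      intro k hk
      have hkn := hSn k hk
      have h1 : ∏ x, q x ^ k x = (∏ x, v x ^ k x) / (∏ x, s ^ k x) := by
        rw [← Finset.prod_div_distrib]
        apply Finset.prod_congr rfl
        intro x _
        rw [hq, div_pow]
      rw [h1, Finset.prod_pow_eq_pow_sum, hkn]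
      congr 1
      rw [Fintype.prod_prod_type]
      simp [Fin.prod_univ_two, hv]
      ring
    have h2 : (∑ k ∈ S, C k * (a ^ k (0,0) * (b ^ k (0,1) * (c ^ k (1,0) * d ^ k (1,1))))) / s ^ n
        = 0 := by
      rw [Finset.sum_div, ← h0]
      apply Finset.sum_congr rfl
      intro k hk
      rw [hprod k hk, mul_div_assoc]
    have hsn : (s:ℝ) ^ n ≠ 0 := pow_ne_zero _ hs0.ne'
    rcases div_eq_zero_iff.mp h2 with h | h
    · exact h
    · exact absurd h hsn
  have P1 : ∀ i : ℕ, ∀ b ∈ B, ∀ c ∈ A, ∀ d ∈ A,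
      ∑ k ∈ S.filter (fun k => k (0,0) = i),
        C k * (b ^ k (0,1) * (c ^ k (1,0) * d ^ k (1,1))) = 0 := by
    intro i b hb c hc d hd
    apply peel S (fun k => k (0,0))
      (fun k => C k * (b ^ k (0,1) * (c ^ k (1,0) * d ^ k (1,1)))) A hAinf
    intro a ha
    rw [← base a ha b hb c hc d hd]
    apply Finset.sum_congr rfl
    intro k _
    ring
  have P2 : ∀ i j : ℕ, ∀ c ∈ A, ∀ d ∈ A,
      ∑ k ∈ (S.filter (fun k => k (0,0) = i)).filter (fun k => k (0,1) = j),
        C k * (c ^ k (1,0) * d ^ k (1,1)) = 0 := by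
    intro i j c hc d hd
    apply peel _ (fun k => k (0,1))
      (fun k => C k * (c ^ k (1,0) * d ^ k (1,1))) B hBinf
    intro b hb
    rw [← P1 i b hb c hc d hd]
    apply Finset.sum_congr rfl
    intro k _
    ring
  have P3 : ∀ i j l : ℕ, ∀ d ∈ A,
      ∑ k ∈ ((S.filter (fun k => k (0,0) = i)).filter (fun k => k (0,1) = j)).filter
          (fun k => k (1,0) = l),
        C k * d ^ k (1,1) = 0 := by
    intro i j l d hd
    apply peel _ (fun k => k (1,0))
      (fun k => C k * d ^ k (1,1)) A hAinf
    intro c hc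
    rw [← P2 i j c hc d hd]
    apply Finset.sum_congr rfl
    intro k _
    ring
  have P4 : ∀ i j l m : ℕ,
      ∑ k ∈ (((S.filter (fun k => k (0,0) = i)).filter (fun k => k (0,1) = j)).filter
          (fun k => k (1,0) = l)).filter (fun k => k (1,1) = m),
        C k = 0 := by
    intro i j l m
    apply peel _ (fun k => k (1,1)) C A hAinf
    intro d hd
    exact P3 i j l d hd
  intro k hkn
  have hk4 := P4 (k (0,0)) (k (0,1)) (k (1,0)) (k (1,1))
  have hsingle : (((S.filter (fun k' => k' (0,0) = k (0,0))).filter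
      (fun k' => k' (0,1) = k (0,1))).filter (fun k' => k' (1,0) = k (1,0))).filter
      (fun k' => k' (1,1) = k (1,1)) = {k} := by
    ext k'
    simp only [Finset.mem_filter, Finset.mem_singleton]
    constructor
    · rintro ⟨⟨⟨⟨hk'S, h1⟩, h2⟩, h3⟩, h4⟩
      funext x
      obtain ⟨i, j⟩ := x
      fin_cases i <;> fin_cases j <;> assumption
    · rintro rfl
      exact ⟨⟨⟨⟨hmemS _ hkn, rfl⟩, rfl⟩, rfl⟩, rfl⟩
  rw [hsingle, Finset.sum_singleton] at hk4
  rw [hC] at hk4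
  simp only at hk4
  rcases mul_eq_zero.mp hk4 with h | h
  · exfalso
    have hfac : (0:ℝ) < (∏ x, ((k x).factorial : ℝ)) := by
      apply Finset.prod_pos
      intro x _
      exact_mod_cast Nat.factorial_pos (k x)
    have hnf : (0:ℝ) < (n.factorial : ℝ) := by exact_mod_cast Nat.factorial_pos n
    have := div_pos hnf hfac
    linarith [this, h.symm.le]
  · exact h

end
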